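/- A countable union of projectively Hurewicz subspaces of a Tychonoff space is projectively Hurewicz. -/

import Mathlib

open Set Filter Topology

/-- A family is a γ-cover: it is infinite and every point belongs to all but
finitely many members. -/
def IsGammaCover {X : Type*} (𝒰 : Set (Set X)) : Prop :=
  𝒰.Infinite ∧ ∀ x : X, {V ∈ 𝒰 | x ∉ V}.Finite

/-- The Hurewicz property `U_fin(𝒪, Γ)`. -/
def Hurewicz (Y : Type*) [TopologicalSpace Y] : Prop :=
  ∀ 𝒰 : ℕ → Set (Set Y),
    (∀ n, (∀ V ∈ 𝒰 n, IsOpen V) ∧ ⋃₀ 𝒰 n = Set.univ) →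
    ∃ 𝒱 : ℕ → Set (Set Y), (∀ n, 𝒱 n ⊆ 𝒰 n ∧ (𝒱 n).Finite) ∧
      ∀ y : Y, ∀ᶠ n in Filter.atTop, y ∈ ⋃₀ 𝒱 n

/-- A space is projectively Hurewicz if every separable metrizable continuous
image of it is Hurewicz. -/
def ProjHurewicz (X : Type*) [TopologicalSpace X] : Prop :=
  ∀ (Y : Type) [TopologicalSpace Y],
    TopologicalSpace.MetrizableSpace Y → TopologicalSpace.SeparableSpace Y →
    ∀ f : X → Y, Continuous f → Function.Surjective f → Hurewicz Y

/-- A zero-set: the preimage of `{0}` of a continuous real-valued function. -/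
def IsZeroSet {X : Type*} [TopologicalSpace X] (F : Set X) : Prop :=
  ∃ f : X → ℝ, Continuous f ∧ F = f ⁻¹' {0}

/-- A cozero set: the complement of a zero-set. -/
def IsCozero {X : Type*} [TopologicalSpace X] (U : Set X) : Prop :=
  ∃ f : X → ℝ, Continuous f ∧ U = f ⁻¹' {0}ᶜ

/-- A (countable) cozero γ-cover which is γ_F-shrinkable: it admits a
γ-cover by zero-sets shrinking it. -/
def GammaFShrinkable {X : Type*} [TopologicalSpace X] (𝒰 : Set (Set X)) : Prop :=
  𝒰.Countable ∧ (∀ V ∈ 𝒰, IsCozero V) ∧ IsGammaCover 𝒰 ∧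
    ∃ F : Set X → Set X, (∀ V ∈ 𝒰, IsZeroSet (F V) ∧ F V ⊆ V) ∧
      (F '' 𝒰).Infinite ∧ ∀ x : X, {V ∈ 𝒰 | x ∉ F V}.Finite

/-- An ω-groupable open cover: an open cover admitting a partition into finite
parts such that every finite set is contained in a member of all but finitely
many parts. -/
def OmegaGroupable {X : Type*} [TopologicalSpace X] (𝒲 : Set (Set X)) : Prop :=
  (∀ V ∈ 𝒲, IsOpen V) ∧ ⋃₀ 𝒲 = Set.univ ∧
    ∃ P : ℕ → Set (Set X), (∀ n, (P n).Finite ∧ (P n).Nonempty) ∧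
      (⋃ n, P n) = 𝒲 ∧ (∀ m n, m ≠ n → Disjoint (P m) (P n)) ∧
      ∀ F : Set X, F.Finite → ∀ᶠ n in Filter.atTop, ∃ U ∈ P n, F ⊆ U

/-- `C_p(X)`: continuous real-valued functions with the topology of pointwise
convergence (subspace of the product `X → ℝ`). -/
abbrev Cp (X : Type*) [TopologicalSpace X] : Type _ :=
  {f : X → ℝ // Continuous f}

/-- The constant zero function in `C_p(X)`. -/
def zeroCp (X : Type*) [TopologicalSpace X] : Cp X :=
  ⟨fun _ => 0, continuous_const⟩

/-- `A ∈ Γ_g`: `A` is infinite, `g ∉ A` and `A` converges to `g`. -/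
def GammaAt {X : Type*} [TopologicalSpace X] (g : Cp X) (A : Set (Cp X)) : Prop :=
  A.Infinite ∧ g ∉ A ∧ ∀ W ∈ 𝓝 g, (A \ W).Finite

/-- `B ∈ wΓ_g`: `B` admits a partition into finite parts weakly converging
to `g`. -/
def WGammaAt {X : Type*} [TopologicalSpace X] (g : Cp X) (B : Set (Cp X)) : Prop :=
  ∃ S : ℕ → Set (Cp X), (∀ n, (S n).Finite ∧ (S n).Nonempty) ∧
    (⋃ n, S n) = B ∧ (∀ m n, m ≠ n → Disjoint (S m) (S n)) ∧
    ∀ W ∈ 𝓝 g, ∃ s : ℕ → Cp X, (∀ n, s n ∈ S n) ∧ ∀ᶠ n in Filter.atTop, s n ∈ W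

/-- The selection principle `S_fin(Γ_g, wΓ_g)` for `C_p(X)` at the point `g`. -/
def SfinGammaWGamma {X : Type*} [TopologicalSpace X] (g : Cp X) : Prop :=
  ∀ A : ℕ → Set (Cp X), (∀ n, GammaAt g (A n)) →
    ∃ B : ℕ → Set (Cp X), (∀ n, B n ⊆ A n ∧ (B n).Finite) ∧ WGammaAt g (⋃ n, B n)

/-- The selection principle `S_fin(Γ_F, Ω^gr)` for a space `X`. -/
def SfinGammaFOmegaGr (X : Type*) [TopologicalSpace X] : Prop :=
  ∀ 𝒰 : ℕ → Set (Set X), (∀ n, GammaFShrinkable (𝒰 n)) →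
    ∃ 𝒱 : ℕ → Set (Set X), (∀ n, 𝒱 n ⊆ 𝒰 n ∧ (𝒱 n).Finite) ∧
      OmegaGroupable (⋃ n, 𝒱 n)

theorem hurewicz_iUnion {Y : Type*} [TopologicalSpace Y] (S : ℕ → Set Y)
    (hS : ∀ k, Hurewicz (S k)) (hcov : ⋃ k, S k = Set.univ) : Hurewicz Y := by
  intro 𝒰 h𝒰
  have key : ∀ k : ℕ, ∃ 𝒱 : ℕ → Set (Set Y), (∀ n, 𝒱 n ⊆ 𝒰 n ∧ (𝒱 n).Finite) ∧
      ∀ y : Y, y ∈ S k → ∀ᶠ n in Filter.atTop, y ∈ ⋃₀ 𝒱 n := by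
    intro k
    set π : S k → Y := Subtype.val with hπ
    have hcov' : ∀ n, (∀ V ∈ (fun U => π ⁻¹' U) '' 𝒰 n, IsOpen V) ∧
        ⋃₀ ((fun U => π ⁻¹' U) '' 𝒰 n) = Set.univ := by
      intro n
      constructor
      · rintro V ⟨U, hU, rfl⟩
        exact ((h𝒰 n).1 U hU).preimage continuous_subtype_val
      · ext z
        simp only [Set.mem_univ, iff_true, Set.mem_sUnion]
        have : (z : Y) ∈ ⋃₀ 𝒰 n := by rw [(h𝒰 n).2]; trivial
        obtain ⟨U, hU, hz⟩ := this
        exact ⟨π ⁻¹' U, ⟨U, hU, rfl⟩, hz⟩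
    obtain ⟨𝒱', h𝒱', hev⟩ := hS k _ hcov'
    have hchoose : ∀ n, ∀ V ∈ 𝒱' n, ∃ U, U ∈ 𝒰 n ∧ π ⁻¹' U = V := by
      intro n V hV
      obtain ⟨U, hU, hUV⟩ := (h𝒱' n).1 hV
      exact ⟨U, hU, hUV⟩
    choose! g hg1 hg2 using hchoose
    refine ⟨fun n => g n '' 𝒱' n, ?_, ?_⟩
    · intro n
      constructor
      · rintro U ⟨V, hV, rfl⟩
        exact hg1 n V hV
      · exact ((h𝒱' n).2).image _
    · intro y hy
      filter_upwards [hev ⟨y, hy⟩] with n hn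
      obtain ⟨V, hV, hyV⟩ := hn
      exact ⟨g n V, ⟨V, hV, rfl⟩, by rw [← hg2 n V hV] at hyV; exact hyV⟩
  choose 𝒲 h𝒲1 h𝒲2 using key
  refine ⟨fun n => ⋃ k ∈ Finset.range (n + 1), 𝒲 k n, ?_, ?_⟩
  · intro n
    constructor
    · intro U hU
      simp only [Set.mem_iUnion] at hU
      obtain ⟨k, _, hU⟩ := hU
      exact (h𝒲1 k n).1 hU
    · exact Set.Finite.biUnion (Set.finite_mem_finset (Finset.range (n + 1))) fun k _ => (h𝒲1 k n).2
  · intro y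
    have : y ∈ ⋃ k, S k := by rw [hcov]; trivial
    obtain ⟨k, hk⟩ := Set.mem_iUnion.mp this
    filter_upwards [h𝒲2 k y hk, Filter.eventually_ge_atTop k] with n hn hkn
    obtain ⟨U, hU, hyU⟩ := hn
    exact ⟨U, Set.mem_iUnion.mpr ⟨k, Set.mem_iUnion.mpr
      ⟨Finset.mem_range.mpr (Nat.lt_succ_of_le hkn), hU⟩⟩, hyU⟩

/-- A countable union of projectively Hurewicz subspaces of a
Tychonoff space is projectively Hurewicz. -/
theorem projHurewicz_countable_union (X : Type*) [TopologicalSpace X] [T35Space X]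
    (A : ℕ → Set X) (h : ∀ n, ProjHurewicz (A n)) (hcov : ⋃ n, A n = Set.univ) :
    ProjHurewicz X := by
  intro Y _ hmet hsep f hf hsurj
  haveI := hmet
  haveI := hsep
  letI : MetricSpace Y := TopologicalSpace.metrizableSpaceMetric Y
  haveI : SecondCountableTopology Y := UniformSpace.secondCountable_of_separable Y
  have hk : ∀ k : ℕ, Hurewicz (f '' A k : Set Y) := by
    intro k
    have hmet' : TopologicalSpace.MetrizableSpace (f '' A k : Set Y) := inferInstance
    have hsep' : TopologicalSpace.SeparableSpace (f '' A k : Set Y) := inferInstance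
    refine h k (f '' A k : Set Y) hmet' hsep'
      (fun x => ⟨f x, ⟨x.1, x.2, rfl⟩⟩) ?_ ?_
    · exact Continuous.subtype_mk (hf.comp continuous_subtype_val) _
    · rintro ⟨y, x, hx, rfl⟩
      exact ⟨⟨x, hx⟩, rfl⟩
  exact hurewicz_iUnion (fun k => f '' A k) hk
    (by rw [← Set.image_iUnion, hcov, Set.image_univ, Set.range_eq_univ.mpr hsurj])
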